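/- The map sending a binary tree T of size n to its degree-vector d(T) = (d_0, ..., d_n), where d_i is the number of nodes on the maximal left branch of T ending at the i-th leaf (counted from the left, starting at 0), is a bijection from binary trees of size n to vectors (d_0,...,d_n) of nonnegative integers satisfying d_0 + ... + d_n = n and d_0 + ... + d_i > i for all 0 ≤ i ≤ n-1. -/

import Mathlib

/-- Binary trees: a leaf or a binary node with two subtrees. -/
inductive BT : Type
  | leaf : BT
  | node : BT → BT → BT

namespace BT

/-- Number of binary (internal) nodes. -/
def size : BT → ℕ
  | leaf => 0
  | node l r => l.size + r.size + 1

/-- One right rotation somewhere in the tree: ((A,B),C) ↦ (A,(B,C)). -/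
inductive Rot : BT → BT → Prop
  | rotate (A B C : BT) : Rot (node (node A B) C) (node A (node B C))
  | left {l l' : BT} (r : BT) : Rot l l' → Rot (node l r) (node l' r)
  | right (l : BT) {r r' : BT} : Rot r r' → Rot (node l r) (node l r')

/-- Tamari order: reflexive-transitive closure of right rotation. -/
def tle (T T' : BT) : Prop := Relation.ReflTransGen Rot T T'

/-- Bracket-vector: sizes of right subtrees of nodes, in infix order. -/
def bracket : BT → List ℕ
  | leaf => []
  | node l r => bracket l ++ r.size :: bracket r

/-- Dual bracket-vector: sizes of left subtrees of nodes, in infix order. -/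
def dualBracket : BT → List ℕ
  | leaf => []
  | node l r => dualBracket l ++ l.size :: dualBracket r

/-- Canopy word: for each leaf (left to right), 1 if it is a left child, 0 if a right child;
the argument `b` is the value assigned to the tree if it is itself a leaf. -/
def canopyAux (b : ℕ) : BT → List ℕ
  | leaf => [b]
  | node l r => canopyAux 1 l ++ canopyAux 0 r

/-- Canopy-vector of a binary tree. -/
def canopy (T : BT) : List ℕ := canopyAux 1 T

/-- Left-right mirror. -/
def mir : BT → BT
  | leaf => leaf
  | node l r => node (mir r) (mir l)

/-- Tamari interval of size n. -/
def interval (p : BT × BT) (n : ℕ) : Prop :=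
  p.1.size = n ∧ p.2.size = n ∧ tle p.1 p.2

/-- Tamari interval (of unspecified size). -/
def isInt (p : BT × BT) : Prop := p.1.size = p.2.size ∧ tle p.1 p.2

/-- The rise operation (T,T') ↦ ((T,ε),(ε,T')). -/
def riseF (p : BT × BT) : BT × BT := (node p.1 leaf, node leaf p.2)

/-- An interval is modern when its rise is again an interval. -/
def modern (p : BT × BT) : Prop := tle (node p.1 leaf) (node leaf p.2)

/-- Infinitely modern: every iterated rise is an interval. -/
def infModern (p : BT × BT) : Prop :=
  ∀ k : ℕ, tle ((riseF^[k] p).1) ((riseF^[k] p).2)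

/-- Synchronized: equal canopies. -/
def synced (p : BT × BT) : Prop := canopy p.1 = canopy p.2

/-- Self-dual: equal to its dual (mir T', mir T). -/
def selfDual (p : BT × BT) : Prop := mir p.2 = p.1 ∧ mir p.1 = p.2

/-- Number of positions where the two canopies agree. -/
def agreeCount (p : BT × BT) : ℕ :=
  ((List.range (p.1.size + 1)).filter
    (fun i => (canopy p.1).getD i 0 == (canopy p.2).getD i 0)).length

/-- Number of canopy positions of joint type (a on top, b on bottom), for an interval (T,T')
with T' the upper tree. -/
def typeCount (a b : ℕ) (p : BT × BT) : ℕ :=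
  ((List.range (p.1.size + 1)).filter
    (fun i => ((canopy p.2).getD i 0 == a) && ((canopy p.1).getD i 0 == b))).length

end BT

/-- Degree-vector of a binary tree: for each leaf (left to right), the number of nodes on the
maximal left branch ending at that leaf. -/
def BT.degVec : BT → List ℕ
  | BT.leaf => [0]
  | BT.node l r =>
    (match BT.degVec l with
      | [] => []
      | a :: t => (a + 1) :: t) ++ BT.degVec r


namespace BT

lemma sum_take_mono (L : List ℕ) {i j : ℕ} (h : i ≤ j) : (L.take i).sum ≤ (L.take j).sum := by
  have h2 := List.take_add (l := L) (i := i) (j := j - i)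
  rw [Nat.add_sub_cancel' h] at h2
  rw [h2, List.sum_append]
  exact Nat.le_add_right _ _

lemma degVec_cons (T : BT) : ∃ a t, T.degVec = a :: t := by
  induction T with
  | leaf => exact ⟨0, [], rfl⟩
  | node l r ihl ihr =>
    obtain ⟨a, t, h⟩ := ihl
    exact ⟨a + 1, t ++ r.degVec, by simp [degVec, h]⟩

lemma degVec_node {l : BT} (r : BT) {a : ℕ} {t : List ℕ} (h : l.degVec = a :: t) :
    (node l r).degVec = ((a + 1) :: t) ++ r.degVec := by
  simp [degVec, h]

lemma degVec_length (T : BT) : T.degVec.length = T.size + 1 := by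
  induction T with
  | leaf => simp [degVec, size]
  | node l r ihl ihr =>
    obtain ⟨a, t, h⟩ := degVec_cons l
    rw [degVec_node r h]
    rw [h] at ihl
    simp [size] at *
    omega

lemma degVec_sum (T : BT) : T.degVec.sum = T.size := by
  induction T with
  | leaf => simp [degVec, size]
  | node l r ihl ihr =>
    obtain ⟨a, t, h⟩ := degVec_cons l
    rw [degVec_node r h]
    rw [h] at ihl
    simp [size] at *
    omega

lemma take_sum_bump (a : ℕ) (t : List ℕ) {j : ℕ} (h : 1 ≤ j) :
    ((((a + 1) :: t)).take j).sum = (((a :: t)).take j).sum + 1 := by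
  obtain ⟨m, rfl⟩ := Nat.exists_eq_add_of_le h
  rw [Nat.add_comm 1 m]
  simp [List.take_succ_cons]
  omega

lemma degVec_take_ge (T : BT) : ∀ j ≤ T.size, j ≤ (T.degVec.take j).sum := by
  induction T with
  | leaf => intro j hj; simp [size] at hj; simp [hj]
  | node l r ihl ihr =>
    intro j hj
    obtain ⟨a, t, h⟩ := degVec_cons l
    have hlt : t.length = l.size := by
      have := degVec_length l; rw [h] at this; simp at this; omega
    rw [degVec_node r h]
    simp [size] at hj
    rcases le_or_gt j (l.size + 1) with hle | hgt
    · rw [List.take_append_of_le_length (by simp [hlt]; omega)]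
      rcases Nat.eq_zero_or_pos j with rfl | hj1
      · simp
      · rw [take_sum_bump a t hj1]
        have h1 : j - 1 ≤ ((l.degVec).take (j - 1)).sum := ihl (j - 1) (by omega)
        have h2 : ((l.degVec).take (j-1)).sum ≤ ((l.degVec).take j).sum :=
          sum_take_mono _ (by omega)
        rw [h] at h1 h2
        omega
    · have hform : j = ((a+1) :: t).length + (j - (l.size + 1)) := by simp [hlt]; omega
      rw [hform, List.take_length_add_append]
      have hsl : l.degVec.sum = l.size := degVec_sum l
      rw [h] at hsl; simp at hsl
      have h1 : j - (l.size + 1) ≤ ((r.degVec).take (j - (l.size + 1))).sum :=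
        ihr _ (by omega)
      simp [List.sum_append]
      omega

lemma degVec_take_lt (l r : BT) {j : ℕ} (h1 : 1 ≤ j) (h2 : j ≤ l.size) :
    j < (((node l r).degVec).take j).sum := by
  obtain ⟨a, t, h⟩ := degVec_cons l
  have hlt : t.length = l.size := by
    have := degVec_length l; rw [h] at this; simp at this; omega
  rw [degVec_node r h, List.take_append_of_le_length (by simp [hlt]; omega),
    take_sum_bump a t h1]
  have h3 := degVec_take_ge l j h2
  rw [h] at h3
  omega

lemma degVec_node_take (l r : BT) {a : ℕ} {t : List ℕ} (h : l.degVec = a :: t) :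
    ((node l r).degVec).take (l.size + 1) = (a + 1) :: t := by
  have hlt : t.length = l.size := by
    have := degVec_length l; rw [h] at this; simp at this; omega
  rw [degVec_node r h, List.take_append_of_le_length (by simp [hlt])]
  apply List.take_of_length_le
  simp [hlt]

lemma degVec_node_drop (l r : BT) :
    ((node l r).degVec).drop (l.size + 1) = r.degVec := by
  obtain ⟨a, t, h⟩ := degVec_cons l
  have hlt : t.length = l.size := by
    have := degVec_length l; rw [h] at this; simp at this; omega
  rw [degVec_node r h]
  rw [show l.size + 1 = ((a+1) :: t).length by simp [hlt]]
  exact List.drop_left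

lemma degVec_node_take_sum (l r : BT) :
    (((node l r).degVec).take (l.size + 1)).sum = l.size + 1 := by
  obtain ⟨a, t, h⟩ := degVec_cons l
  rw [degVec_node_take l r h]
  have hsl : l.degVec.sum = l.size := degVec_sum l
  rw [h] at hsl; simp at hsl ⊢
  omega

lemma degVec_injective : Function.Injective degVec := by
  intro T
  induction T with
  | leaf =>
    intro T' hEq
    cases T' with
    | leaf => rfl
    | node l' r' =>
      obtain ⟨a, t, h⟩ := degVec_cons l'
      rw [degVec_node r' h] at hEq
      simp [degVec] at hEq
  | node l r ihl ihr =>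
    intro T' hEq
    cases T' with
    | leaf =>
      obtain ⟨a, t, h⟩ := degVec_cons l
      rw [degVec_node r h] at hEq
      simp [degVec] at hEq
    | node l' r' =>
      have hsz : l.size = l'.size := by
        by_contra hne
        rcases Nat.lt_or_ge l.size l'.size with hlt | hge
        · have h1 := degVec_node_take_sum l r
          have h2 := degVec_take_lt l' r' (j := l.size + 1) (by omega) (by omega)
          rw [← hEq] at h2
          omega
        · have h1 := degVec_node_take_sum l' r'
          have h2 := degVec_take_lt l r (j := l'.size + 1) (by omega) (by omega)
          rw [hEq] at h2
          omega
      obtain ⟨a, t, h⟩ := degVec_cons l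
      obtain ⟨a', t', h'⟩ := degVec_cons l'
      have htake : ((node l r).degVec).take (l.size + 1)
          = ((node l' r').degVec).take (l.size + 1) := by rw [hEq]
      rw [degVec_node_take l r h, hsz, degVec_node_take l' r' h'] at htake
      have hdrop : ((node l r).degVec).drop (l.size + 1)
          = ((node l' r').degVec).drop (l.size + 1) := by rw [hEq]
      rw [degVec_node_drop, hsz, degVec_node_drop] at hdrop
      simp at htake
      have hl : l = l' := ihl (by rw [h, h', htake.1, htake.2])
      have hr : r = r' := ihr hdrop
      rw [hl, hr]

lemma degVec_surj : ∀ (n : ℕ) (d : List ℕ), d.length = n + 1 → d.sum = n →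
    (∀ i < n, i < (d.take (i + 1)).sum) → ∃ T : BT, T.size = n ∧ T.degVec = d := by
  intro n
  induction n using Nat.strong_induction_on with
  | _ n IH =>
  intro d hlen hsum hpre
  rcases Nat.eq_zero_or_pos n with rfl | hpos
  · obtain ⟨x, rfl⟩ := List.length_eq_one_iff.mp hlen
    have hx : x = 0 := by simpa using hsum
    exact ⟨leaf, rfl, by simp [degVec, hx]⟩
  · obtain ⟨d0, rest, rfl⟩ : ∃ d0 rest, d = d0 :: rest := by
      cases d with
      | nil => simp at hlen
      | cons x t => exact ⟨x, t, rfl⟩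
    have hrlen : rest.length = n := by simpa using hlen
    have hd0 : 1 ≤ d0 := by
      have := hpre 0 hpos
      simp at this
      omega
    -- existence of j with 1 ≤ j ≤ n and prefix sum = j
    have hPw : (((d0 :: rest).take (n + 1)).sum < n + 1) := by
      rw [List.take_of_length_le (le_of_eq hlen), hsum]
      omega
    set P : ℕ → Prop := fun j => ((d0 :: rest).take j).sum < j with hP
    have hPex : ∃ j, P j := ⟨n + 1, hPw⟩
    set j0 := Nat.find hPex with hj0def
    have hj0spec : ((d0 :: rest).take j0).sum < j0 := Nat.find_spec hPex
    have hj0le : j0 ≤ n + 1 := Nat.find_le hPw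
    have hj0ge : 2 ≤ j0 := by
      rcases Nat.lt_or_ge j0 2 with h | h
      · interval_cases j0
        · simp at hj0spec
        · simp [List.take_succ_cons] at hj0spec
          omega
      · exact h
    have hj1min : ¬ P (j0 - 1) := Nat.find_min hPex (by omega)
    have hj1 : ((d0 :: rest).take (j0 - 1)).sum = j0 - 1 := by
      have h2 : ((d0 :: rest).take (j0 - 1)).sum ≤ ((d0 :: rest).take j0).sum :=
        sum_take_mono _ (by omega)
      simp only [hP, not_lt] at hj1min
      omega
    -- the minimal such j
    have hQex : ∃ j, 1 ≤ j ∧ ((d0 :: rest).take j).sum = j := ⟨j0 - 1, by omega, hj1⟩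
    set jm := Nat.find hQex with hjmdef
    obtain ⟨hjm1, hjmsum⟩ : 1 ≤ jm ∧ ((d0 :: rest).take jm).sum = jm := Nat.find_spec hQex
    have hjmle : jm ≤ n := le_trans (Nat.find_le ⟨by omega, hj1⟩) (by omega)
    have hstrict : ∀ m, 1 ≤ m → m < jm → m + 1 ≤ ((d0 :: rest).take m).sum := by
      intro m hm1 hmlt
      have hge : m ≤ ((d0 :: rest).take m).sum := by
        have := hpre (m - 1) (by omega)
        have hm : m - 1 + 1 = m := by omega
        rw [hm] at this
        omega
      have hne := Nat.find_min hQex hmlt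
      simp only [not_and] at hne
      have := hne hm1
      omega
    -- split the vector
    have htakejm : (d0 :: rest).take jm = d0 :: rest.take (jm - 1) := by
      rw [show jm = (jm - 1) + 1 by omega]
      simp [List.take_succ_cons]
    have hsumtake : d0 + (rest.take (jm - 1)).sum = jm := by
      rw [htakejm] at hjmsum
      simpa using hjmsum
    -- left part
    have hllen : ((d0 - 1) :: rest.take (jm - 1)).length = (jm - 1) + 1 := by
      simp [List.length_take, hrlen]
      omega
    have hlsum : ((d0 - 1) :: rest.take (jm - 1)).sum = jm - 1 := by
      simp
      omega
    have hlpre : ∀ i < jm - 1, i < ((((d0 - 1) :: rest.take (jm - 1)).take (i + 1)).sum) := by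
      intro i hi
      rw [List.take_succ_cons, List.take_take]
      have hmin : min i (jm - 1) = i := by omega
      rw [hmin]
      have hs := hstrict (i + 1) (by omega) (by omega)
      rw [List.take_succ_cons] at hs
      simp at hs ⊢
      omega
    obtain ⟨l, hlsize, hldeg⟩ := IH (jm - 1) (by omega) _ hllen hlsum hlpre
    -- right part
    have hdrop : (d0 :: rest).drop jm = rest.drop (jm - 1) := by
      rw [show jm = (jm - 1) + 1 by omega]
      simp
    have hrlen2 : (rest.drop (jm - 1)).length = (n - jm) + 1 := by
      simp [hrlen]
      omega
    have hrsum : (rest.drop (jm - 1)).sum = n - jm := by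
      have := List.take_append_drop jm (d0 :: rest)
      have hsum2 : ((d0 :: rest).take jm).sum + ((d0 :: rest).drop jm).sum = n := by
        rw [← List.sum_append, this, hsum]
      rw [hjmsum, hdrop] at hsum2
      omega
    have hrpre : ∀ i < n - jm, i < (((rest.drop (jm - 1)).take (i + 1)).sum) := by
      intro i hi
      have hta := List.take_add (l := d0 :: rest) (i := jm) (j := i + 1)
      have hp := hpre (jm + i) (by omega)
      rw [show jm + i + 1 = jm + (i + 1) by omega, hta, List.sum_append, hjmsum, hdrop] at hp
      omega
    obtain ⟨r, hrsize, hrdeg⟩ := IH (n - jm) (by omega) _ hrlen2 hrsum hrpre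
    refine ⟨node l r, ?_, ?_⟩
    · simp [size, hlsize, hrsize]
      omega
    · rw [degVec_node r hldeg, hrdeg]
      have : d0 - 1 + 1 = d0 := by omega
      rw [this]
      simp [List.take_append_drop]

end BT

theorem degree_vector_bijection (n : ℕ) :
    Set.BijOn BT.degVec {T : BT | T.size = n}
      {d : List ℕ | d.length = n + 1 ∧ d.sum = n ∧ ∀ i < n, i < (d.take (i + 1)).sum} := by
  refine ⟨?_, ?_, ?_⟩
  · intro T hT
    simp only [Set.mem_setOf_eq] at hT ⊢
    refine ⟨by rw [BT.degVec_length, hT], by rw [BT.degVec_sum, hT], ?_⟩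
    intro i hi
    have := BT.degVec_take_ge T (i + 1) (by omega)
    omega
  · intro T _ T' _ h
    exact BT.degVec_injective h
  · intro d hd
    obtain ⟨T, hs, hdv⟩ := BT.degVec_surj n d hd.1 hd.2.1 hd.2.2
    exact ⟨T, hs, hdv⟩
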